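/- Let Z = ∑_a e^{-β E_a} and suppose the energy assignment f(a) = (1/β) ln[(1/λ)(e^{β E_a} − ((1-λ)/d) ∑_i e^{β E_i})] is well-defined (the argument of the logarithm is positive). Then for the Gibbs state ρ = (1/Z) ∑_a e^{-β E_a} Π_a and the noisy POVM A_a = λ Π_a + (1-λ)/d · 1 with Lüders instrument I_a(ρ) = A_a^{1/2} ρ A_a^{1/2}, one has ∑_a e^{β f(a)} I_a(ρ) = (1/Z) · 1. -/

import Mathlib

open Matrix BigOperators ComplexOrder

/-- The positive semidefinite square root of a positive semidefinite matrix
(the definition of Mathlib of December 2024, since removed). -/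
noncomputable def Matrix.PosSemidef.sqrt {n : Type*} [Fintype n] [DecidableEq n] {𝕜 : Type*}
    [RCLike 𝕜] {A : Matrix n n 𝕜} (hA : A.PosSemidef) : Matrix n n 𝕜 :=
  hA.1.eigenvectorUnitary.1 * diagonal ((↑) ∘ (√·) ∘ hA.1.eigenvalues) *
  (star hA.1.eigenvectorUnitary : Matrix n n 𝕜)

open scoped MatrixOrder in
lemma psd_sqrt_eq_of_mul_self {n : Type*} [Fintype n] [DecidableEq n] {A B : Matrix n n ℂ}
    (hA : A.PosSemidef) (hB : B.PosSemidef) (h : B * B = A) : hA.sqrt = B := by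
  have h1 : hA.sqrt = CFC.sqrt A := by
    rw [CFC.sqrt_eq_cfc, cfc_nnreal_eq_real _ A, hA.1.cfc_eq]
    simp [Matrix.PosSemidef.sqrt, IsHermitian.cfc, Unitary.conjStarAlgAut_apply, Function.comp_def,
      max_eq_left (hA.eigenvalues_nonneg _)]
  rw [h1]
  exact CFC.sqrt_unique h hB.nonneg

lemma combo_sq {n : Type*} [Fintype n] [DecidableEq n] (P : Matrix n n ℂ)
    (hP : P * P = P) (s t : ℝ) :
    (((s:ℂ)) • P + ((t:ℂ)) • (1 - P)) * (((s:ℂ)) • P + ((t:ℂ)) • (1 - P))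
      = (((s^2:ℝ)):ℂ) • P + (((t^2:ℝ)):ℂ) • (1 - P) := by
  have h2 : P * (1 - P) = 0 := by rw [mul_sub, mul_one, hP, sub_self]
  have h3 : (1 - P) * P = 0 := by rw [sub_mul, one_mul, hP, sub_self]
  have h4 : (1 - P) * (1 - P) = 1 - P := by
    rw [sub_mul, one_mul, mul_sub, mul_one, hP]; abel
  simp only [add_mul, mul_add, Matrix.smul_mul, Matrix.mul_smul, hP, h2, h3, h4,
    smul_zero, add_zero, zero_add, smul_smul]
  push_cast
  ring_nf

lemma psd_combo {n : Type*} [Fintype n] [DecidableEq n] (P : Matrix n n ℂ)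
    (hPh : P.IsHermitian) (hP : P * P = P) (s t : ℝ) (hs : 0 ≤ s) (ht : 0 ≤ t) :
    Matrix.PosSemidef (((s:ℂ)) • P + ((t:ℂ)) • (1 - P)) := by
  set C : Matrix n n ℂ := ((Real.sqrt s : ℂ)) • P + ((Real.sqrt t : ℂ)) • (1 - P) with hC
  have hCh : Cᴴ = C := by
    simp [hC, conjTranspose_add, conjTranspose_smul, conjTranspose_sub, conjTranspose_one,
      hPh.eq, Complex.star_def, Complex.conj_ofReal]
  have key : ((s:ℂ)) • P + ((t:ℂ)) • (1 - P) = Cᴴ * C := by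
    rw [hCh, hC, combo_sq P hP, Real.sq_sqrt hs, Real.sq_sqrt ht]
  rw [key]
  exact Matrix.posSemidef_conjTranspose_mul_self C

/-- Key identity for the generalized Jarzynski equality: with the energy assignment
`f a = (1/β) ln[(1/λ)(e^{β E a} − ((1-λ)/d) ∑ i e^{β E i})]` (assumed well-defined), the
Gibbs state `ρ = (1/Z) ∑ e^{-β E a} Π a`, and the noisy POVM `A a = λ Π a + (1-λ)/d · 1`
with Lüders instrument `I_a(ρ) = √(A a) ρ √(A a)`, one has `∑ a, e^{β f a} I_a(ρ) = (1/Z) 1`. -/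
theorem stmt_13 {d : ℕ} (hd : 0 < d)
    (β : ℝ) (hβ : 0 < β) (E : Fin d → ℝ)
    (lam : ℝ) (hlam0 : 0 < lam) (hlam1 : lam ≤ 1)
    (P : Fin d → Matrix (Fin d) (Fin d) ℂ)
    (hPh : ∀ a, (P a).IsHermitian)
    (hPo : ∀ a a', P a * P a' = if a = a' then P a else 0)
    (hPsum : ∑ a, P a = 1)
    (hPtr : ∀ a, (P a).trace = 1)
    (Z : ℝ) (hZ : Z = ∑ a, Real.exp (-(β * E a)))
    (ρ : Matrix (Fin d) (Fin d) ℂ)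
    (hρ : ρ = ((1 / Z : ℝ) : ℂ) • ∑ a, ((Real.exp (-(β * E a)) : ℝ) : ℂ) • P a)
    (A : Fin d → Matrix (Fin d) (Fin d) ℂ)
    (hA : ∀ a, A a = (lam : ℂ) • P a + (((1 - lam) / d : ℝ) : ℂ) • 1)
    (hApsd : ∀ a, (A a).PosSemidef)
    (f : Fin d → ℝ)
    (hpos : ∀ a, 0 < (1 / lam) * (Real.exp (β * E a) - ((1 - lam) / d) * ∑ i, Real.exp (β * E i)))
    (hf : ∀ a, f a = (1 / β) *
      Real.log ((1 / lam) * (Real.exp (β * E a) - ((1 - lam) / d) * ∑ i, Real.exp (β * E i)))) :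
    ∑ a, ((Real.exp (β * f a) : ℝ) : ℂ) • ((hApsd a).sqrt * ρ * (hApsd a).sqrt)
      = ((1 / Z : ℝ) : ℂ) • (1 : Matrix (Fin d) (Fin d) ℂ) := by
  set μ : ℝ := (1 - lam) / d with hμ
  set S : ℝ := ∑ i, Real.exp (β * E i) with hS
  have hdR : (0:ℝ) < d := by exact_mod_cast hd
  have hμ0 : 0 ≤ μ := div_nonneg (by linarith) hdR.le
  have hlm : 0 ≤ lam + μ := by linarith
  have hPP : ∀ a, P a * P a = P a := fun a => by simpa using hPo a a
  -- the explicit square root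
  set B : Fin d → Matrix (Fin d) (Fin d) ℂ :=
    fun a => ((Real.sqrt (lam + μ) : ℂ)) • P a + ((Real.sqrt μ : ℂ)) • (1 - P a) with hB
  have hBpsd : ∀ a, (B a).PosSemidef := fun a =>
    psd_combo (P a) (hPh a) (hPP a) _ _ (Real.sqrt_nonneg _) (Real.sqrt_nonneg _)
  have hBsq : ∀ a, B a * B a = A a := by
    intro a
    rw [hB, combo_sq (P a) (hPP a), Real.sq_sqrt hlm, Real.sq_sqrt hμ0, hA a, smul_sub]
    have : ((lam + μ : ℝ) : ℂ) = (lam : ℂ) + (μ : ℂ) := by push_cast; ring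
    rw [this, add_smul]
    abel
  have hBsqrt : ∀ a, (hApsd a).sqrt = B a := by
    intro a
    exact psd_sqrt_eq_of_mul_self (hApsd a) (hBpsd a) (hBsq a)
  -- products with ρ
  have hPρ : ∀ a, P a * ρ = (((1 / Z) * Real.exp (-(β * E a)) : ℝ) : ℂ) • P a := by
    intro a
    rw [hρ, Matrix.mul_smul, Finset.mul_sum]
    simp only [Matrix.mul_smul, hPo]
    simp only [smul_ite, smul_zero, Finset.sum_ite_eq, Finset.mem_univ, if_true]
    rw [smul_smul]
    congr 1
    push_cast; ring
  have hρP : ∀ a, ρ * P a = (((1 / Z) * Real.exp (-(β * E a)) : ℝ) : ℂ) • P a := by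
    intro a
    rw [hρ, Matrix.smul_mul, Finset.sum_mul]
    simp only [Matrix.smul_mul, hPo]
    simp only [smul_ite, smul_zero]
    rw [Finset.sum_ite_eq' Finset.univ a (fun b => ((Real.exp (-(β * E b)) : ℝ) : ℂ) • P b)]
    simp only [Finset.mem_univ, if_true]
    rw [smul_smul]
    congr 1
    push_cast; ring
  have hcomm : ∀ a, ρ * B a = B a * ρ := by
    intro a
    rw [hB]
    simp only [Matrix.mul_add, Matrix.add_mul, Matrix.mul_smul, Matrix.smul_mul,
      Matrix.mul_sub, Matrix.sub_mul, Matrix.mul_one, Matrix.one_mul, hPρ a, hρP a]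
  have hsand : ∀ a, (hApsd a).sqrt * ρ * (hApsd a).sqrt = A a * ρ := by
    intro a
    rw [hBsqrt a, Matrix.mul_assoc, hcomm a, ← Matrix.mul_assoc, hBsq a]
  simp only [hsand]
  -- scalar facts
  have hβne : β ≠ 0 := ne_of_gt hβ
  have hlamne : lam ≠ 0 := ne_of_gt hlam0
  have hexpf : ∀ a, Real.exp (β * f a) = (1 / lam) * (Real.exp (β * E a) - μ * S) := by
    intro a
    rw [hf a, ← mul_assoc, mul_one_div, div_self hβne, one_mul, Real.exp_log (hpos a)]
  have hdmu : (d:ℝ) * μ = 1 - lam := by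
    rw [hμ]; field_simp
  have hsum_e : ∑ a, Real.exp (β * f a) = S := by
    simp only [hexpf]
    rw [← Finset.mul_sum]
    have h1 : ∑ a, (Real.exp (β * E a) - μ * S) = S - d * (μ * S) := by
      rw [Finset.sum_sub_distrib, Finset.sum_const, Finset.card_univ, Fintype.card_fin,
        nsmul_eq_mul, ← hS]
    rw [h1]
    have h2 : S - (d:ℝ) * (μ * S) = lam * S := by
      have : (d:ℝ) * (μ * S) = ((d:ℝ) * μ) * S := by ring
      rw [this, hdmu]; ring
    rw [h2]
    field_simp
  have hcoef : ∀ a, Real.exp (β * f a) * (lam * ((1/Z) * Real.exp (-(β * E a))))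
      + (S * μ) * ((1/Z) * Real.exp (-(β * E a))) = 1/Z := by
    intro a
    have hee : Real.exp (β * E a) * Real.exp (-(β * E a)) = 1 := by
      rw [← Real.exp_add]; simp
    rw [hexpf a]
    have hl : (1/lam) * (Real.exp (β * E a) - μ * S) * (lam * ((1/Z) * Real.exp (-(β * E a))))
        = (Real.exp (β * E a) - μ * S) * ((1/Z) * Real.exp (-(β * E a))) := by
      rw [show (1/lam) * (Real.exp (β * E a) - μ * S) * (lam * ((1/Z) * Real.exp (-(β * E a))))
          = ((1/lam) * lam) * ((Real.exp (β * E a) - μ * S) * ((1/Z) * Real.exp (-(β * E a))))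
          from by ring, one_div_mul_cancel hlamne, one_mul]
    rw [hl]
    calc (Real.exp (β * E a) - μ * S) * ((1/Z) * Real.exp (-(β * E a)))
          + (S * μ) * ((1/Z) * Real.exp (-(β * E a)))
        = (Real.exp (β * E a) * Real.exp (-(β * E a))) * (1/Z) := by ring
      _ = 1/Z := by rw [hee]; ring
  have hAρ : ∀ a, A a * ρ
      = ((lam * ((1/Z) * Real.exp (-(β * E a))) : ℝ) : ℂ) • P a + ((μ : ℝ) : ℂ) • ρ := by
    intro a
    rw [hA a, Matrix.add_mul, Matrix.smul_mul, Matrix.smul_mul, Matrix.one_mul, hPρ a,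
      smul_smul]
    congr 1
    push_cast; ring
  simp only [hAρ, smul_add, smul_smul]
  rw [Finset.sum_add_distrib, ← Finset.sum_smul]
  have h1 : (∑ a, ((Real.exp (β * f a) : ℝ) : ℂ) * ((μ : ℝ) : ℂ)) = ((S * μ : ℝ) : ℂ) := by
    have h2 : ((∑ a, Real.exp (β * f a) : ℝ) : ℂ) = ((S : ℝ) : ℂ) := by rw [hsum_e]
    push_cast at h2 ⊢
    rw [← Finset.sum_mul, h2]
  rw [h1, hρ, smul_smul, Finset.smul_sum]
  simp only [smul_smul]
  rw [← Finset.sum_add_distrib, ← hPsum, Finset.smul_sum]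
  apply Finset.sum_congr rfl
  intro a _
  rw [← add_smul]
  congr 1
  have h3 := congrArg (fun x : ℝ => (x : ℂ)) (hcoef a)
  push_cast at h3
  push_cast
  linear_combination h3
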